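/- (Reduced 2-state UPG correctness.) Work with probability vectors on 2 states {0,1}; let h = ½·δ_0 + ½·δ_1. For bits r_0, r_1, …, r_n ∈ {0,1} define Z_n(r_0; r_n, …, r_1) recursively: Z_0(r_0) = δ_{1−r_0}; for n ≥ 1, setting b_n = max(r_0, r_n): Z_n(r_0; r_n, …, r_1) = ( Z_{n−1}(r_0; r_{n−1}, …, r_1) ∗ (δ_{1−b_n} ⊕ h) ) ⊕ ( δ_{1−b_n} ∗ h ). Then for all n ≥ 0 and all bits r_0, …, r_n satisfying (r_0 = 1 → r_i = 0 for all 1 ≤ i ≤ n), the vector Z_n(r_0; r_n, …, r_1) assigns probability (r_0·2^n + ∑_{i=1}^{n} r_i·2^{i−1}) / 2^n to state 0. -/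

import Mathlib

noncomputable section

/-- Series composition: distribution of `min` of two independent states. -/
def smin {N : ℕ} (p q : Fin N → ℝ) : Fin N → ℝ :=
  fun k => ∑ i, ∑ j, if min i j = k then p i * q j else 0

/-- Parallel composition: distribution of `max` of two independent states. -/
def smax {N : ℕ} (p q : Fin N → ℝ) : Fin N → ℝ :=
  fun k => ∑ i, ∑ j, if max i j = k then p i * q j else 0

/-- The point mass at state `s`. -/
def delta {N : ℕ} (s : Fin N) : Fin N → ℝ := fun i => if i = s then 1 else 0

/-- The fair 2-state pswitch `h = ½·δ₀ + ½·δ₁`. -/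
def hB : Fin 2 → ℝ := fun i => (1 / 2) * delta (0 : Fin 2) i + (1 / 2) * delta (1 : Fin 2) i

/-- The reduced (series-parallel) 2-state UPG `Z_n(r₀; r_n, …, r₁)`:
`Z₀(r₀) = δ_{1-r₀}`; for `n ≥ 1`, with `b_n = max(r₀, r_n)`,
`Z_n = (Z_{n-1} ∗ (δ_{1-b_n} ⊕ h)) ⊕ (δ_{1-b_n} ∗ h)`. -/
def Z (r : ℕ → Fin 2) : ℕ → (Fin 2 → ℝ)
  | 0 => delta (1 - r 0)
  | n + 1 =>
    smax (smin (Z r n) (smax (delta (1 - max (r 0) (r (n + 1)))) hB))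
      (smin (delta (1 - max (r 0) (r (n + 1)))) hB)

lemma Zsum (r : ℕ → Fin 2) (n : ℕ) : Z r n 0 + Z r n 1 = 1 := by
  induction n with
  | zero =>
    rcases (by omega : r 0 = 0 ∨ r 0 = 1) with h | h <;>
      simp [Z, h, delta]
  | succ n ih =>
    rcases (by omega : max (r 0) (r (n+1)) = 0 ∨ max (r 0) (r (n+1)) = 1) with h | h <;>
      · simp only [Z, h, smin, smax, delta, hB, Fin.sum_univ_two]
        norm_num
        linarith

/-- Reduced 2-state UPG correctness: with input bits `r₀, …, r_n` (where
`r₀ = 1` forces all other bits to `0`), `Z_n` assigns probability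
`(r₀·2ⁿ + ∑_{i=1}^n r_i·2^{i-1})/2ⁿ` to state `0`. -/
theorem upg2_reduced (n : ℕ) (r : ℕ → Fin 2)
    (hr : r 0 = 1 → ∀ i, 1 ≤ i → i ≤ n → r i = 0) :
    Z r n 0 =
      (((r 0 : ℕ) : ℝ) * 2 ^ n + ∑ i ∈ Finset.Icc 1 n, ((r i : ℕ) : ℝ) * 2 ^ (i - 1)) / 2 ^ n := by
  induction n with
  | zero =>
    rcases (by omega : r 0 = 0 ∨ r 0 = 1) with h | h <;> simp [Z, h, delta]
  | succ n ih =>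
    have hsum : Z r n 0 + Z r n 1 = 1 := Zsum r n
    have ih' := ih (fun h i h1 h2 => hr h i h1 (by omega))
    have hIcc : ∑ i ∈ Finset.Icc 1 (n+1), ((r i : ℕ) : ℝ) * 2 ^ (i - 1)
        = (∑ i ∈ Finset.Icc 1 n, ((r i : ℕ) : ℝ) * 2 ^ (i - 1)) + ((r (n+1) : ℕ) : ℝ) * 2 ^ n := by
      rw [Finset.sum_Icc_succ_top (by omega : 1 ≤ n + 1)]
      norm_num
    rcases (by omega : r 0 = 0 ∨ r 0 = 1) with h0 | h0
    · rcases (by omega : r (n+1) = 0 ∨ r (n+1) = 1) with h1 | h1 <;>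
      · have hm : max (r 0) (r (n+1)) = r (n+1) := by rw [h0]; simp
        have hZ1 : Z r n 1 = 1 - Z r n 0 := by linarith
        simp only [Z, hm, h1, smin, smax, delta, hB, Fin.sum_univ_two]
        norm_num
        rw [hIcc, h0, h1, hZ1, ih', h0]
        push_cast
        have h2n : (2:ℝ) ^ n ≠ 0 := by positivity
        field_simp
        simp only [show (1:Fin 2) - max 0 1 = 0 from by decide, show (1:Fin 2) - max 0 0 = 1 from by decide, Fin.val_zero, Fin.val_one, Fin.isValue]
        norm_num
        field_simp
        ring
    · have hz : ∀ i, 1 ≤ i → i ≤ n + 1 → r i = 0 := hr h0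
      have h1 : r (n+1) = 0 := hz (n+1) (by omega) le_rfl
      have hm : max (r 0) (r (n+1)) = 1 := by rw [h0, h1]; decide
      have hZn : Z r n 0 = 1 := by
        rw [ih', h0]
        have : ∑ i ∈ Finset.Icc 1 n, ((r i : ℕ) : ℝ) * 2 ^ (i - 1) = 0 := by
          apply Finset.sum_eq_zero
          intro i hi
          simp only [Finset.mem_Icc] at hi
          rw [hz i hi.1 (by omega)]
          norm_num
        rw [this]
        field_simp
        simp
      have hZn1 : Z r n 1 = 0 := by linarith
      have hS : ∑ i ∈ Finset.Icc 1 (n+1), ((r i : ℕ) : ℝ) * 2 ^ (i - 1) = 0 := by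
        apply Finset.sum_eq_zero
        intro i hi
        simp only [Finset.mem_Icc] at hi
        rw [hz i hi.1 hi.2]
        norm_num
      simp only [Z, hm, smin, smax, delta, hB, Fin.sum_univ_two, hZn, hZn1]
      norm_num
      rw [hS, h0]
      norm_num
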